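/- arXiv:1301.4986 — 3 statements merged into one kernel-verified Lean document; each statement's English description precedes it below -/
import Mathlib

section
/- Let N ≥ 1, let V : [0,∞) → ℂ^{N×N} be continuous with V(x) Hermitian for every x ≥ 0, let S be an N×N Hermitian complex matrix, let λ ∈ ℝ, and let M : [0,∞) → ℂ^{N×N} be twice continuously differentiable with −M''(x) − V(x)M(x) = −λM(x) for all x ≥ 0, M'(0) = S·M(0), and M(x) invertible for every x ≥ 0. Then F(x) := M'(x)·M(x)^{−1} is Hermitian for every x ≥ 0, and F(0) = S. -/
open MeasureTheory Set Matrix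

/-- Entrywise derivative (within `Ici 0`) of a matrix-valued function on the
half-line. -/
noncomputable def mderiv {N : ℕ} (M : ℝ → Matrix (Fin N) (Fin N) ℂ) :
    ℝ → Matrix (Fin N) (Fin N) ℂ :=
  fun x => Matrix.of fun i j => derivWithin (fun t => M t i j) (Ici 0) x

theorem stmt_9 (N : ℕ) (hN : 1 ≤ N)
    (V : ℝ → Matrix (Fin N) (Fin N) ℂ)
    (hVcont : ContinuousOn V (Ici 0))
    (hVherm : ∀ x ≥ (0:ℝ), (V x).IsHermitian)
    (S : Matrix (Fin N) (Fin N) ℂ) (hS : S.IsHermitian)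
    (lam : ℝ)
    (M : ℝ → Matrix (Fin N) (Fin N) ℂ)
    (hsmooth : ∀ i j, ContDiffOn ℝ 2 (fun t => M t i j) (Ici 0))
    (hODE : ∀ x ≥ (0:ℝ),
      -(mderiv (mderiv M) x) - V x * M x = (-lam : ℂ) • M x)
    (hBC : mderiv M 0 = S * M 0)
    (hinv : ∀ x ≥ (0:ℝ), IsUnit (M x)) :
    (∀ x ≥ (0:ℝ), (mderiv M x * (M x)⁻¹).IsHermitian)
    ∧ mderiv M 0 * (M 0)⁻¹ = S := by
  have hdet : ∀ x ≥ (0:ℝ), IsUnit (M x).det := fun x hx =>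
    (Matrix.isUnit_iff_isUnit_det _).mp (hinv x hx)
  -- first derivatives of the entries
  have hMd : ∀ (k j : Fin N), ∀ x ∈ Ici (0:ℝ),
      HasDerivWithinAt (fun t => M t k j) (mderiv M x k j) (Ici 0) x := by
    intro k j x hx
    have hd := (hsmooth k j).differentiableOn (by norm_num) x hx
    simpa [mderiv] using hd.hasDerivWithinAt
  -- second derivatives of the entries
  have hgd : ∀ (k j : Fin N), ∀ x ∈ Ici (0:ℝ),
      HasDerivWithinAt (fun t => mderiv M t k j) (mderiv (mderiv M) x k j)
        (Ici 0) x := by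
    intro k j x hx
    have h1 : ContDiffOn ℝ 1 (derivWithin (fun t => M t k j) (Ici 0)) (Ici 0) :=
      (hsmooth k j).derivWithin (uniqueDiffOn_Ici 0) (by norm_num)
    have hd := h1.differentiableOn (by norm_num) x hx
    simpa [mderiv] using hd.hasDerivWithinAt
  -- rewrite the ODE
  have hG : ∀ x ∈ Ici (0:ℝ),
      mderiv (mderiv M) x = (lam : ℂ) • M x - V x * M x := by
    intro x hx
    have h := hODE x hx
    have h' : -(mderiv (mderiv M) x) = (-lam : ℂ) • M x + V x * M x := by
      rw [sub_eq_iff_eq_add] at h; exact h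
    have := congrArg (fun A => -A) h'
    simpa [neg_add, neg_smul, sub_eq_add_neg, add_comm] using this
  -- the Wronskian-type matrix is constant with zero derivative
  have key : ∀ (i j : Fin N), ∀ x ∈ Ici (0:ℝ),
      HasDerivWithinAt
        (fun t => ∑ k, (star (M t k i) * mderiv M t k j
          - star (mderiv M t k i) * M t k j)) 0 (Ici 0) x := by
    intro i j x hx
    have hder : HasDerivWithinAt
        (fun t => ∑ k, (star (M t k i) * mderiv M t k j
          - star (mderiv M t k i) * M t k j))
        (∑ k, ((star (mderiv M x k i) * mderiv M x k j
            + star (M x k i) * mderiv (mderiv M) x k j)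
          - (star (mderiv (mderiv M) x k i) * M x k j
            + star (mderiv M x k i) * mderiv M x k j))) (Ici 0) x := by
      apply HasDerivWithinAt.fun_sum
      intro k _
      exact (((hMd k i x hx).star.mul (hgd k j x hx)).sub
        ((hgd k i x hx).star.mul (hMd k j x hx)))
    have hzero : (∑ k, ((star (mderiv M x k i) * mderiv M x k j
            + star (M x k i) * mderiv (mderiv M) x k j)
          - (star (mderiv (mderiv M) x k i) * M x k j
            + star (mderiv M x k i) * mderiv M x k j))) = 0 := by
      have hmat : (M x)ᴴ * mderiv (mderiv M) x - (mderiv (mderiv M) x)ᴴ * M x = 0 := by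
        rw [hG x hx]
        have hVh := (hVherm x hx).eq
        rw [sub_eq_zero]
        simp [Matrix.conjTranspose_smul, Matrix.conjTranspose_mul, hVh,
          Complex.star_def, Complex.conj_ofReal, Matrix.mul_sub, Matrix.sub_mul,
          Matrix.mul_smul, Matrix.smul_mul, Matrix.mul_assoc]
      have hent := congrFun (congrFun hmat i) j
      calc (∑ k, ((star (mderiv M x k i) * mderiv M x k j
            + star (M x k i) * mderiv (mderiv M) x k j)
          - (star (mderiv (mderiv M) x k i) * M x k j
            + star (mderiv M x k i) * mderiv M x k j)))
          = ((M x)ᴴ * mderiv (mderiv M) x - (mderiv (mderiv M) x)ᴴ * M x) i j := by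
            rw [Matrix.sub_apply, Matrix.mul_apply, Matrix.mul_apply,
              ← Finset.sum_sub_distrib]
            apply Finset.sum_congr rfl
            intro k _
            simp only [Matrix.conjTranspose_apply]
            ring
        _ = 0 := by rw [hmat]; simp
    exact hzero ▸ hder
  -- constancy of the Wronskian
  have hWconst : ∀ x ∈ Ici (0:ℝ),
      (M x)ᴴ * mderiv M x - (mderiv M x)ᴴ * M x
        = (M 0)ᴴ * mderiv M 0 - (mderiv M 0)ᴴ * M 0 := by
    intro x hx
    ext i j
    have hdiff : DifferentiableOn ℝ
        (fun t => ∑ k, (star (M t k i) * mderiv M t k j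
          - star (mderiv M t k i) * M t k j)) (Ici 0) :=
      fun y hy => ((key i j y hy).differentiableWithinAt)
    have hfz : ∀ y ∈ Ici (0:ℝ), fderivWithin ℝ
        (fun t => ∑ k, (star (M t k i) * mderiv M t k j
          - star (mderiv M t k i) * M t k j)) (Ici 0) y = 0 := by
      intro y hy
      have := (key i j y hy).hasFDerivWithinAt.fderivWithin ((uniqueDiffOn_Ici 0) y hy)
      rw [this]
      ext t
      simp
    have hc := (convex_Ici (0:ℝ)).is_const_of_fderivWithin_eq_zero hdiff hfz hx
      (self_mem_Ici)
    simpa [Matrix.sub_apply, Matrix.mul_apply, Matrix.conjTranspose_apply,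
      Finset.sum_sub_distrib] using hc
  -- the Wronskian vanishes at 0
  have hW0 : (M 0)ᴴ * mderiv M 0 - (mderiv M 0)ᴴ * M 0 = 0 := by
    rw [hBC, sub_eq_zero]
    simp [Matrix.conjTranspose_mul, hS.eq, Matrix.mul_assoc]
  have hsym : ∀ x ≥ (0:ℝ), (M x)ᴴ * mderiv M x = (mderiv M x)ᴴ * M x := by
    intro x hx
    have := (hWconst x hx).trans hW0
    exact sub_eq_zero.mp this
  constructor
  · intro x hx
    have hd := hdet x hx
    have hdH : IsUnit ((M x)ᴴ).det := by
      rw [Matrix.det_conjTranspose]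
      exact hd.star
    show (mderiv M x * (M x)⁻¹)ᴴ = _
    rw [Matrix.conjTranspose_mul, Matrix.conjTranspose_nonsing_inv]
    calc ((M x)ᴴ)⁻¹ * (mderiv M x)ᴴ
        = ((M x)ᴴ)⁻¹ * ((mderiv M x)ᴴ * M x) * (M x)⁻¹ := by
          rw [Matrix.mul_assoc (((M x)ᴴ)⁻¹),
            Matrix.mul_nonsing_inv_cancel_right _ _ hd]
      _ = ((M x)ᴴ)⁻¹ * ((M x)ᴴ * mderiv M x) * (M x)⁻¹ := by rw [← hsym x hx]
      _ = mderiv M x * (M x)⁻¹ := by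
          rw [Matrix.nonsing_inv_mul_cancel_left _ _ hdH]
  · rw [hBC]
    exact Matrix.mul_nonsing_inv_cancel_right _ _ (hdet 0 le_rfl)
end

section
/- Let N ≥ 1, λ > 0, b ≥ 0, let F_b be an N×N Hermitian complex matrix, and define M(x) = cosh(√λ·(x−b))·I + (1/√λ)·sinh(√λ·(x−b))·F_b for x ≥ b, where I is the N×N identity matrix. Let v ∈ ℂ^N with F_b·v = μ·v for some μ ∈ ℝ, and let x ≥ b be such that M(x) is invertible. Then M'(x)·M(x)^{−1}·v = f(x,μ)·v, where f(x,μ) = √λ·(√λ·tanh(√λ·(x−b)) + μ)/(√λ + μ·tanh(√λ·(x−b))). -/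
open MeasureTheory Set Matrix

/-- Entrywise derivative (within `Ici b`) of a matrix-valued function on the
half-line `[b,∞)`. -/
noncomputable def mderivFrom {N : ℕ} (b : ℝ) (M : ℝ → Matrix (Fin N) (Fin N) ℂ) :
    ℝ → Matrix (Fin N) (Fin N) ℂ :=
  fun x => Matrix.of fun i j => derivWithin (fun t => M t i j) (Ici b) x

/-- The scalar eigenvalue branch
`f(x,μ) = √λ (√λ tanh(√λ(x-b)) + μ) / (√λ + μ tanh(√λ(x-b)))`. -/
noncomputable def branch (lam b x μ : ℝ) : ℝ :=
  Real.sqrt lam * (Real.sqrt lam * Real.tanh (Real.sqrt lam * (x - b)) + μ)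
    / (Real.sqrt lam + μ * Real.tanh (Real.sqrt lam * (x - b)))

theorem stmt_12 (N : ℕ) (hN : 1 ≤ N)
    (lam : ℝ) (hlam : 0 < lam) (b : ℝ) (hb : 0 ≤ b)
    (Fb : Matrix (Fin N) (Fin N) ℂ) (hFb : Fb.IsHermitian)
    (M : ℝ → Matrix (Fin N) (Fin N) ℂ)
    (hM : ∀ x ≥ b,
      M x = (Real.cosh (Real.sqrt lam * (x - b)) : ℂ) • (1 : Matrix (Fin N) (Fin N) ℂ)
        + (((Real.sqrt lam)⁻¹ * Real.sinh (Real.sqrt lam * (x - b)) : ℝ) : ℂ) • Fb)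
    (v : Fin N → ℂ) (μ : ℝ) (hv : Fb *ᵥ v = (μ : ℂ) • v)
    (x : ℝ) (hx : b ≤ x) (hinv : IsUnit (M x)) :
    (mderivFrom b M x * (M x)⁻¹) *ᵥ v = (branch lam b x μ : ℂ) • v := by
  by_cases hv0 : v = 0
  · simp [hv0]
  set a := Real.sqrt lam with ha
  have ha0 : 0 < a := Real.sqrt_pos.mpr hlam
  set ch := Real.cosh (a * (x - b)) with hch
  set sh := Real.sinh (a * (x - b)) with hsh
  have hch0 : ch ≠ 0 := ne_of_gt (Real.cosh_pos _)
  -- eigenvalue of M x on v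
  set cR : ℝ := ch + a⁻¹ * sh * μ with hcR
  have hMv : M x *ᵥ v = (cR : ℂ) • v := by
    rw [hM x hx]
    rw [add_mulVec, smul_mulVec, smul_mulVec, one_mulVec, hv, smul_smul,
      ← add_smul]
    congr 1
    rw [hcR, hch, hsh]
    push_cast
    ring
  -- cR ≠ 0
  have hMinv : (M x)⁻¹ * M x = 1 := nonsing_inv_mul _ (isUnit_iff_isUnit_det _ |>.mp hinv)
  have hcR0 : cR ≠ 0 := by
    intro h
    apply hv0
    have : (M x)⁻¹ *ᵥ (M x *ᵥ v) = v := by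
      rw [mulVec_mulVec, hMinv, one_mulVec]
    rw [hMv, h] at this
    simpa using this.symm
  have hcRC : (cR : ℂ) ≠ 0 := by exact_mod_cast hcR0
  have hinvv : (M x)⁻¹ *ᵥ v = (cR : ℂ)⁻¹ • v := by
    have h1 : (M x)⁻¹ *ᵥ (M x *ᵥ v) = v := by
      rw [mulVec_mulVec, hMinv, one_mulVec]
    rw [hMv, mulVec_smul] at h1
    have h2 := congrArg (fun w => (cR : ℂ)⁻¹ • w) h1
    simp only [smul_smul, inv_mul_cancel₀ hcRC, one_smul] at h2
    exact h2
  -- derivative of M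
  have hder : ∀ i j, derivWithin (fun t => M t i j) (Ici b) x
      = ((a * sh : ℝ) : ℂ) * (1 : Matrix (Fin N) (Fin N) ℂ) i j + (ch : ℂ) * Fb i j := by
    intro i j
    have hcongr : EqOn (fun t => M t i j)
        (fun t => ((Real.cosh (a * (t - b)) : ℝ) : ℂ) * (1 : Matrix (Fin N) (Fin N) ℂ) i j
          + ((a⁻¹ * Real.sinh (a * (t - b)) : ℝ) : ℂ) * Fb i j) (Ici b) := by
      intro t ht
      simp [hM t ht, Matrix.add_apply, Matrix.smul_apply, smul_eq_mul]
    have hd1 : HasDerivAt (fun t : ℝ => Real.cosh (a * (t - b))) (a * sh) x := by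
      have : HasDerivAt (fun t : ℝ => a * (t - b)) a x := by
        simpa using ((hasDerivAt_id x).sub_const b).const_mul a
      simpa [hsh, mul_comm] using this.cosh
    have hd2 : HasDerivAt (fun t : ℝ => a⁻¹ * Real.sinh (a * (t - b))) ch x := by
      have : HasDerivAt (fun t : ℝ => a * (t - b)) a x := by
        simpa using ((hasDerivAt_id x).sub_const b).const_mul a
      have := (this.sinh).const_mul a⁻¹
      simpa [hch, mul_comm, inv_mul_cancel_left₀ (ne_of_gt ha0), mul_assoc,
        inv_mul_cancel₀ (ne_of_gt ha0)] using this
    have hD : HasDerivAt (fun t : ℝ =>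
        ((Real.cosh (a * (t - b)) : ℝ) : ℂ) * (1 : Matrix (Fin N) (Fin N) ℂ) i j
          + ((a⁻¹ * Real.sinh (a * (t - b)) : ℝ) : ℂ) * Fb i j)
        (((a * sh : ℝ) : ℂ) * (1 : Matrix (Fin N) (Fin N) ℂ) i j + (ch : ℂ) * Fb i j) x :=
      ((hd1.ofReal_comp).mul_const _).add ((hd2.ofReal_comp).mul_const _)
    rw [derivWithin_congr hcongr (hcongr (mem_Ici.mpr hx))]
    exact (hD.hasDerivWithinAt).derivWithin (uniqueDiffOn_Ici b x (mem_Ici.mpr hx))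
  have hM' : mderivFrom b M x = ((a * sh : ℝ) : ℂ) • (1 : Matrix (Fin N) (Fin N) ℂ)
      + (ch : ℂ) • Fb := by
    ext i j
    simp [mderivFrom, hder i j, Matrix.add_apply, Matrix.smul_apply, smul_eq_mul]
  set dR : ℝ := a * sh + ch * μ with hdR
  have hM'v : mderivFrom b M x *ᵥ v = (dR : ℂ) • v := by
    rw [hM']
    rw [add_mulVec, smul_mulVec, smul_mulVec, one_mulVec, hv, smul_smul,
      ← add_smul]
    congr 1
    rw [hdR, hch, hsh]
    push_cast
    ring
  have key : (mderivFrom b M x * (M x)⁻¹) *ᵥ v = ((cR : ℂ)⁻¹ * (dR : ℂ)) • v := by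
    rw [← mulVec_mulVec, hinvv, mulVec_smul, hM'v, smul_smul, mul_comm]
  rw [key]
  congr 1
  -- scalar identity
  have hbr : branch lam b x μ = cR⁻¹ * dR := by
    have htanh : Real.tanh (a * (x - b)) = sh / ch := Real.tanh_eq_sinh_div_cosh _
    have hden : a + μ * (sh / ch) ≠ 0 := by
      have : a + μ * (sh / ch) = a * cR / ch := by
        field_simp [hcR]
        rw [hcR, mul_add, ← mul_assoc, ← mul_assoc, mul_inv_cancel₀ (ne_of_gt ha0)]
        ring
      rw [this]
      exact div_ne_zero (mul_ne_zero (ne_of_gt ha0) hcR0) hch0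
    rw [branch, ← ha, htanh, hcR, hdR]
    field_simp
  rw [hbr]
  push_cast
  ring
end

section
/- Let N ≥ 1, λ > 0, b ≥ 0, let F_b be an N×N Hermitian complex matrix, and let ν ∈ ℂ^N be nonzero. Define φ_ν(x) = cosh(√λ·(x−b))·ν + (1/√λ)·sinh(√λ·(x−b))·F_b·ν for x ≥ b. Then ∫_b^∞ ‖φ_ν(x)‖² dx < ∞ if and only if F_b·ν = −√λ·ν; moreover, if F_b·ν = −√λ·ν then φ_ν(x) = e^{−√λ·(x−b)}·ν for all x ≥ b. -/
open MeasureTheory Set Matrix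

theorem stmt_15 (N : ℕ) (hN : 1 ≤ N)
    (lam : ℝ) (hlam : 0 < lam) (b : ℝ) (hb : 0 ≤ b)
    (Fb : Matrix (Fin N) (Fin N) ℂ) (hFb : Fb.IsHermitian)
    (ν : EuclideanSpace ℂ (Fin N)) (hν : ν ≠ 0)
    (φ : ℝ → EuclideanSpace ℂ (Fin N))
    (hφ : ∀ x ≥ b,
      φ x = (Real.cosh (Real.sqrt lam * (x - b)) : ℂ) • ν
        + (((Real.sqrt lam)⁻¹ * Real.sinh (Real.sqrt lam * (x - b)) : ℝ) : ℂ)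
            • Matrix.toEuclideanLin Fb ν) :
    (IntegrableOn (fun x => ‖φ x‖ ^ 2) (Ioi b)
      ↔ Matrix.toEuclideanLin Fb ν = (-(Real.sqrt lam) : ℂ) • ν)
    ∧ (Matrix.toEuclideanLin Fb ν = (-(Real.sqrt lam) : ℂ) • ν →
        ∀ x ≥ b, φ x = (Real.exp (-(Real.sqrt lam) * (x - b)) : ℂ) • ν) := by
  set s := Real.sqrt lam with hs_def
  have hs : 0 < s := Real.sqrt_pos.2 hlam
  have hsC : (s : ℂ) ≠ 0 := by exact_mod_cast hs.ne'
  set w := Matrix.toEuclideanLin Fb ν with hw_def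
  -- second part
  have key : w = (-(s : ℝ) : ℂ) • ν →
      ∀ x ≥ b, φ x = (Real.exp (-s * (x - b)) : ℂ) • ν := by
    intro h x hx
    rw [hφ x hx, h, smul_smul]
    have h1 : ((s⁻¹ * Real.sinh (s * (x - b)) : ℝ) : ℂ) * (-(s : ℝ) : ℂ)
        = ((-Real.sinh (s * (x - b)) : ℝ) : ℂ) := by
      push_cast
      field_simp
    rw [h1, ← add_smul]
    congr 1
    have h2 : Real.cosh (s * (x - b)) + -Real.sinh (s * (x - b))
        = Real.exp (-s * (x - b)) := by
      rw [← sub_eq_add_neg, Real.cosh_sub_sinh, neg_mul]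
    exact_mod_cast congrArg (Complex.ofReal) h2
  refine ⟨⟨?_, ?_⟩, key⟩
  · -- integrable → eigenvector
    intro hint
    by_contra h
    set u := ν + ((s⁻¹ : ℝ) : ℂ) • w with hu_def
    set d := ν - ((s⁻¹ : ℝ) : ℂ) • w with hd_def
    have hu : u ≠ 0 := by
      intro h0
      apply h
      have h1 : ((s⁻¹ : ℝ) : ℂ) • w = -ν := by
        rw [hu_def] at h0
        linear_combination (norm := module) h0
      have h3 : ((s : ℝ) : ℂ) • (((s⁻¹ : ℝ) : ℂ) • w) = ((s : ℝ) : ℂ) • (-ν) :=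
        congrArg _ h1
      rw [smul_smul, show ((s : ℝ) : ℂ) * ((s⁻¹ : ℝ) : ℂ) = 1 by
        push_cast; field_simp, one_smul] at h3
      rw [h3]
      module
    have hdec : ∀ x ≥ b, φ x
        = ((Real.exp (s * (x - b)) / 2 : ℝ) : ℂ) • u
          + ((Real.exp (-(s * (x - b))) / 2 : ℝ) : ℂ) • d := by
      intro x hx
      rw [hφ x hx, hu_def, hd_def, Real.cosh_eq, Real.sinh_eq]
      push_cast
      match_scalars <;> field_simp <;> ring
    set M := max b (b + s⁻¹ * Real.log ((2 + ‖d‖) / ‖u‖)) with hM_def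
    have hbM : b ≤ M := le_max_left _ _
    have hu' : 0 < ‖u‖ := norm_pos_iff.2 hu
    have hC : 0 < (2 + ‖d‖) / ‖u‖ := div_pos (by positivity) hu'
    have hbound : ∀ x ∈ Ioi M, (1 : ℝ) ≤ ‖φ x‖ ^ 2 := by
      intro x hx
      have hxM : M < x := hx
      have hxb : b ≤ x := le_trans hbM hxM.le
      have ht0 : 0 ≤ s * (x - b) := by nlinarith
      have ht : Real.log ((2 + ‖d‖) / ‖u‖) ≤ s * (x - b) := by
        have h1 : b + s⁻¹ * Real.log ((2 + ‖d‖) / ‖u‖) ≤ M := le_max_right _ _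
        have h2 : s⁻¹ * Real.log ((2 + ‖d‖) / ‖u‖) ≤ x - b := by linarith
        calc Real.log ((2 + ‖d‖) / ‖u‖)
            = s * (s⁻¹ * Real.log ((2 + ‖d‖) / ‖u‖)) := by field_simp
          _ ≤ s * (x - b) := by nlinarith
      have hexp : (2 + ‖d‖) / ‖u‖ ≤ Real.exp (s * (x - b)) := by
        calc (2 + ‖d‖) / ‖u‖ = Real.exp (Real.log ((2 + ‖d‖) / ‖u‖)) :=
              (Real.exp_log hC).symm
          _ ≤ Real.exp (s * (x - b)) := Real.exp_le_exp.2 ht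
      have hexp2 : 2 + ‖d‖ ≤ Real.exp (s * (x - b)) * ‖u‖ := by
        rw [div_le_iff₀ hu'] at hexp
        linarith
      have hexpneg : Real.exp (-(s * (x - b))) ≤ 1 := by
        rw [Real.exp_le_one_iff]
        linarith
      have hnorm : (1 : ℝ) ≤ ‖φ x‖ := by
        rw [hdec x hxb]
        have h1 : ‖((Real.exp (s * (x - b)) / 2 : ℝ) : ℂ) • u‖
            = Real.exp (s * (x - b)) / 2 * ‖u‖ := by
          rw [norm_smul, Complex.norm_real, Real.norm_eq_abs,
            abs_of_pos (by positivity)]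
        have h2 : ‖((Real.exp (-(s * (x - b))) / 2 : ℝ) : ℂ) • d‖
            = Real.exp (-(s * (x - b))) / 2 * ‖d‖ := by
          rw [norm_smul, Complex.norm_real, Real.norm_eq_abs,
            abs_of_pos (by positivity)]
        calc (1 : ℝ) ≤ Real.exp (s * (x - b)) / 2 * ‖u‖
              - Real.exp (-(s * (x - b))) / 2 * ‖d‖ := by nlinarith [norm_nonneg d]
          _ = ‖((Real.exp (s * (x - b)) / 2 : ℝ) : ℂ) • u‖
              - ‖((Real.exp (-(s * (x - b))) / 2 : ℝ) : ℂ) • d‖ := by rw [h1, h2]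
          _ ≤ _ := by
              have := norm_sub_norm_le (((Real.exp (s * (x - b)) / 2 : ℝ) : ℂ) • u)
                (-(((Real.exp (-(s * (x - b))) / 2 : ℝ) : ℂ) • d))
              simpa [sub_neg_eq_add] using this
      calc (1 : ℝ) = 1 * 1 := by ring
        _ ≤ ‖φ x‖ * ‖φ x‖ := mul_le_mul hnorm hnorm (by norm_num) (norm_nonneg _)
        _ = ‖φ x‖ ^ 2 := (sq _).symm
    have hIM : IntegrableOn (fun x => ‖φ x‖ ^ 2) (Ioi M) :=
      hint.mono_set (Ioi_subset_Ioi hbM)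
    have hone : IntegrableOn (fun _ : ℝ => (1 : ℝ)) (Ioi M) := by
      refine Integrable.mono' hIM aestronglyMeasurable_const ?_
      filter_upwards [ae_restrict_mem measurableSet_Ioi] with x hx
      simpa using hbound x hx
    rw [integrableOn_const_iff (C := (1 : ℝ))] at hone
    rcases hone with h1 | h1
    · norm_num at h1
    · rw [Real.volume_Ioi] at h1
      exact (lt_irrefl _ h1).elim
  · -- eigenvector → integrable
    intro h
    have hφ' := key h
    have hbase : IntegrableOn (fun x => Real.exp (-(2 * s) * x)) (Ioi b) :=
      exp_neg_integrableOn_Ioi b (by positivity)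
    have hI : IntegrableOn
        (fun x => Real.exp (2 * s * b) * ‖ν‖ ^ 2 * Real.exp (-(2 * s) * x))
        (Ioi b) := hbase.const_mul _
    refine hI.congr_fun ?_ measurableSet_Ioi
    intro x hx
    have hxb : b ≤ x := le_of_lt hx
    dsimp only
    rw [hφ' x hxb, norm_smul, Complex.norm_real, Real.norm_eq_abs,
      abs_of_pos (Real.exp_pos _)]
    have e1 : Real.exp (2 * s * b) * Real.exp (-(2 * s) * x)
        = Real.exp (-s * (x - b)) * Real.exp (-s * (x - b)) := by
      rw [← Real.exp_add, ← Real.exp_add]; ring_nf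
    linear_combination ‖ν‖ ^ 2 * e1
end
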